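/- arXiv:2511.12871 — 5 statements merged into one kernel-verified Lean document; each statement's English description precedes it below -/
import Mathlib

section
/- Let H be a group in which the centralizer of every nontrivial element is infinite cyclic, and suppose every group homomorphism from H to Z is trivial. Then for every k ≥ 1, every subgroup of H × Z^k that is the fixed subgroup of some endomorphism of H × Z^k is isomorphic either to Z^s for some s ≤ k+1, or to N × Z^s where s ≤ k and N is the fixed subgroup of some endomorphism of H. -/
/-- The fixed subgroup of an endomorphism `φ` of a group `G`. -/
def fixedSubgroup {G : Type*} [Group G] (φ : G →* G) : Subgroup G where
  carrier := {x | φ x = x}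
  one_mem' := by simp
  mul_mem' := by
    intro a b ha hb
    simp only [Set.mem_setOf_eq, map_mul] at *
    rw [ha, hb]
  inv_mem' := by
    intro a ha
    simp only [Set.mem_setOf_eq, map_inv] at *
    rw [ha]

/-- A subgroup `H` of `G` is end-fixed up to isomorphism if `H ≅ Fix φ`
for some endomorphism `φ` of `G`. -/
def IsEndFixed {G : Type*} [Group G] (H : Subgroup G) : Prop :=
  ∃ φ : G →* G, Nonempty (H ≃* fixedSubgroup φ)

/-- A subgroup `H` of `G` is aut-fixed up to isomorphism if `H ≅ Fix φ`
for some automorphism `φ` of `G`. -/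
def IsAutFixed {G : Type*} [Group G] (H : Subgroup G) : Prop :=
  ∃ φ : G ≃* G, Nonempty (H ≃* fixedSubgroup φ.toMonoidHom)

/-- The free abelian group `ℤ^m` of rank `m`, written multiplicatively. -/
abbrev ZPow' (m : ℕ) := Multiplicative (Fin m → ℤ)

lemma addsub_free (m : ℕ) (B : AddSubgroup (Fin m → ℤ)) :
    ∃ s ≤ m, Nonempty (B ≃+ (Fin s → ℤ)) := by
  let S : Submodule ℤ (Fin m → ℤ) := AddSubgroup.toIntSubmodule B
  refine ⟨Module.finrank ℤ S, ?_, ⟨?_⟩⟩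
  · have h1 := Submodule.finrank_le S
    simpa using h1
  · exact ((Module.finBasis ℤ S).equivFun.toAddEquiv : B ≃+ _)

lemma master {G : Type*} [Group G] (m : ℕ) (f : G →* ZPow' m)
    (hf : Function.Injective f) : ∃ s ≤ m, Nonempty (G ≃* ZPow' s) := by
  let f' : Additive G →+ (Fin m → ℤ) :=
    { toFun := fun a => Multiplicative.toAdd (f (Additive.toMul a))
      map_zero' := by simp
      map_add' := by intro a b; simp }
  have hf' : Function.Injective f' := by
    intro a b hab
    exact hf (Multiplicative.toAdd.injective hab)
  obtain ⟨s, hs, ⟨e⟩⟩ := addsub_free m f'.range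
  exact ⟨s, hs, ⟨AddEquiv.toMultiplicativeRight ((AddMonoidHom.ofInjective hf').trans e)⟩⟩

theorem stmt5 (H : Type*) [Group H]
    (hcent : ∀ x : H, x ≠ 1 →
      Nonempty (Subgroup.centralizer ({x} : Set H) ≃* Multiplicative ℤ))
    (htriv : ∀ f : H →* Multiplicative ℤ, f = 1)
    (k : ℕ) (hk : 1 ≤ k)
    (Ψ : (H × ZPow' k) →* (H × ZPow' k)) :
    (∃ s ≤ k + 1, Nonempty (fixedSubgroup Ψ ≃* ZPow' s)) ∨
    (∃ s ≤ k, ∃ φ : H →* H,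
      Nonempty (fixedSubgroup Ψ ≃* (fixedSubgroup φ × ZPow' s))) := by
  set φ : H →* H := (MonoidHom.fst _ _).comp (Ψ.comp (MonoidHom.inl _ _)) with hφ
  set β : ZPow' k →* H := (MonoidHom.fst _ _).comp (Ψ.comp (MonoidHom.inr _ _)) with hβ
  set γ : ZPow' k →* ZPow' k := (MonoidHom.snd _ _).comp (Ψ.comp (MonoidHom.inr _ _)) with hγ
  have hsnd : ∀ h : H, (Ψ (h,1)).2 = 1 := by
    intro h
    have hi : ∀ i : Fin k, Multiplicative.toAdd ((Ψ (h,1)).2) i = 0 := by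
      intro i
      let f : H →* Multiplicative ℤ :=
        { toFun := fun h => Multiplicative.ofAdd (Multiplicative.toAdd ((Ψ (h,1)).2) i)
          map_one' := by
            show Multiplicative.ofAdd (Multiplicative.toAdd ((Ψ 1).2) i) = 1
            simp
          map_mul' := by
            intro a b
            show Multiplicative.ofAdd (Multiplicative.toAdd ((Ψ (a*b,1)).2) i) = _
            have h1 : ((a*b : H), (1 : ZPow' k)) = ((a,(1:ZPow' k)) * (b,1)) := by simp
            rw [h1, map_mul]
            simp }
      have := congrFun (congrArg (fun g => g.toFun) (htriv f)) h
      simpa [f] using this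
    have : Multiplicative.toAdd ((Ψ (h,1)).2) = 0 := funext hi
    simpa using this
  have hΨ : ∀ h z, Ψ (h, z) = (φ h * β z, γ z) := by
    intro h z
    have h1 : ((h, z) : H × ZPow' k) = (h,1) * (1,z) := by simp
    rw [h1, map_mul]
    ext
    · simp [hφ, hβ]
    · simp [hγ, hsnd h]
  have hcomm : ∀ h z, φ h * β z = β z * φ h := by
    intro h z
    have h1 : ((h,1) : H × ZPow' k) * (1,z) = (1,z) * (h,1) := by simp
    have h2 : Ψ (h,1) * Ψ (1,z) = Ψ (1,z) * Ψ (h,1) := by rw [← map_mul, ← map_mul, h1]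
    have h3 := congrArg Prod.fst h2
    simpa [hφ, hβ] using h3
  have hmem : ∀ x : H × ZPow' k,
      x ∈ fixedSubgroup Ψ ↔ (φ x.1 * β x.2 = x.1 ∧ γ x.2 = x.2) := by
    intro x
    have h0 : x ∈ fixedSubgroup Ψ ↔ Ψ x = x := Iff.rfl
    rw [h0]
    obtain ⟨a, b⟩ := x
    rw [hΨ a b, Prod.ext_iff]
  by_cases hc : ∀ x ∈ fixedSubgroup Ψ, β x.2 = 1
  · -- Case: β vanishes on the projection; Fix Ψ ≅ Fix φ × B₀
    right
    set B₀ : Subgroup (ZPow' k) := fixedSubgroup γ ⊓ β.ker with hB₀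
    obtain ⟨s, hs, ⟨e⟩⟩ := master k B₀.subtype B₀.subtype_injective
    refine ⟨s, hs, φ, ⟨?_⟩⟩
    have toIso : fixedSubgroup Ψ ≃* (fixedSubgroup φ × B₀) :=
      { toFun := fun x =>
          (⟨(x : H × ZPow' k).1, by
              have h1 := (hmem x).1 x.2
              have h2 := hc x x.2
              have h3 := h1.1
              rw [h2, mul_one] at h3
              exact h3⟩,
           ⟨(x : H × ZPow' k).2, by
              refine ⟨((hmem x).1 x.2).2, ?_⟩
              exact hc x x.2⟩)
        invFun := fun p =>
          ⟨((p.1 : H), (p.2 : ZPow' k)), by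
            refine (hmem _).2 ⟨?_, p.2.2.1⟩
            have hker : β (p.2 : ZPow' k) = 1 := p.2.2.2
            have hfix : φ (p.1 : H) = (p.1 : H) := p.1.2
            simp [hker, hfix]⟩
        left_inv := fun x => rfl
        right_inv := fun p => rfl
        map_mul' := fun x y => rfl }
    exact toIso.trans ((MulEquiv.refl (fixedSubgroup φ)).prodCongr e)
  · -- Case: some fixed element has β x.2 ≠ 1
    left
    push_neg at hc
    obtain ⟨x₀, hx₀, hne⟩ := hc
    set c₀ : H := β x₀.2 with hc₀
    have hC : ∀ x ∈ fixedSubgroup Ψ, (x : H × ZPow' k).1 ∈ Subgroup.centralizer ({c₀} : Set H) := by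
      intro x hx
      have h1 := (hmem x).1 hx
      have hφC : φ x.1 ∈ Subgroup.centralizer ({c₀} : Set H) := by
        rw [Subgroup.mem_centralizer_iff]
        intro y hy
        rw [Set.mem_singleton_iff] at hy
        subst hy
        exact (hcomm x.1 x₀.2).symm
      have hβC : β x.2 ∈ Subgroup.centralizer ({c₀} : Set H) := by
        rw [Subgroup.mem_centralizer_iff]
        intro y hy
        rw [Set.mem_singleton_iff] at hy
        subst hy
        rw [hc₀, ← map_mul, ← map_mul, mul_comm]
      rw [← h1.1]
      exact Subgroup.mul_mem _ hφC hβC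
    obtain ⟨e⟩ := hcent c₀ hne
    set C := Subgroup.centralizer ({c₀} : Set H)
    let j : fixedSubgroup Ψ →* ZPow' (k+1) :=
      { toFun := fun x => Multiplicative.ofAdd
          (Fin.cons (Multiplicative.toAdd (e ⟨(x : H × ZPow' k).1, hC x x.2⟩))
            (Multiplicative.toAdd (x : H × ZPow' k).2))
        map_one' := by
          have h1 : (⟨((1 : fixedSubgroup Ψ) : H × ZPow' k).1, hC 1 (fixedSubgroup Ψ).one_mem⟩ : C) = 1 := rfl
          show Multiplicative.ofAdd _ = 1
          rw [h1, map_one]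
          have : (Fin.cons (Multiplicative.toAdd (1 : Multiplicative ℤ))
              (Multiplicative.toAdd ((1 : fixedSubgroup Ψ) : H × ZPow' k).2) : Fin (k+1) → ℤ) = 0 := by
            funext i
            refine Fin.cases ?_ ?_ i <;> simp
          rw [this]
          rfl
        map_mul' := by
          intro x y
          show Multiplicative.ofAdd _ = Multiplicative.ofAdd _ * Multiplicative.ofAdd _
          rw [← ofAdd_add]
          congr 1
          have h1 : (⟨((x*y : fixedSubgroup Ψ) : H × ZPow' k).1, hC _ (x*y).2⟩ : C)
              = ⟨(x : H × ZPow' k).1, hC x x.2⟩ * ⟨(y : H × ZPow' k).1, hC y y.2⟩ := rfl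
          rw [h1, map_mul]
          funext i
          refine Fin.cases ?_ ?_ i <;> simp }
    have hj : Function.Injective j := by
      rw [injective_iff_map_eq_one]
      intro x hx
      have h0 : (Fin.cons (Multiplicative.toAdd (e ⟨(x : H × ZPow' k).1, hC x x.2⟩))
          (Multiplicative.toAdd (x : H × ZPow' k).2) : Fin (k+1) → ℤ) = 0 := by
        have := congrArg Multiplicative.toAdd hx
        simpa [j] using this
      have ha : Multiplicative.toAdd (e ⟨(x : H × ZPow' k).1, hC x x.2⟩) = 0 := by
        have := congrFun h0 0
        simpa using this
      have hb : Multiplicative.toAdd ((x : H × ZPow' k).2) = 0 := by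
        funext i
        have := congrFun h0 i.succ
        simpa using this
      have hx1 : (x : H × ZPow' k).1 = 1 := by
        have he1 : e ⟨(x : H × ZPow' k).1, hC x x.2⟩ = 1 := by
          have h5 : Multiplicative.ofAdd (Multiplicative.toAdd (e ⟨(x : H × ZPow' k).1, hC x x.2⟩)) = Multiplicative.ofAdd 0 := by rw [ha]
          simpa using h5
        have hsub : (⟨(x : H × ZPow' k).1, hC x x.2⟩ : C) = 1 :=
          e.injective (by rw [he1]; exact (map_one e).symm)
        simpa using congrArg Subtype.val hsub
      have hx2 : (x : H × ZPow' k).2 = 1 := by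
        have h5 : Multiplicative.ofAdd (Multiplicative.toAdd ((x : H × ZPow' k).2)) = Multiplicative.ofAdd 0 := by rw [hb]
        simpa using h5
      have hxx : (x : H × ZPow' k) = 1 := Prod.ext hx1 hx2
      exact Subtype.ext hxx
    obtain ⟨s, hs, ⟨e2⟩⟩ := master (k+1) j hj
    exact ⟨s, hs, ⟨e2⟩⟩
end

section
/- Let n ≥ 2, m ≥ 1, let φ be an endomorphism of F_n, Q an m×m integer matrix, P an n×m integer matrix, and let Ψ = Ψ_{φ,Q,P} be the endomorphism of F_n × Z^m sending u t^a to φ(u) t^{aQ+uP}. Set K = {u ∈ Fix φ | there exists a ∈ Z^m with a = aQ + uP} and A = {a ∈ Z^m | a = aQ}. Then K is a normal subgroup of Fix φ, A ≅ Z^s for some s ≤ m, and Fix Ψ ≅ K × A ≅ K × Z^s. -/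
/-- The free abelian group `ℤ^m` of rank `m`, written multiplicatively. -/
abbrev ZPowGrp (m : ℕ) := Multiplicative (Fin m → ℤ)

/-- The abelianization homomorphism of the free group `F_n`, with values in `ℤ^n`. -/
def freeAb (n : ℕ) : FreeGroup (Fin n) →* Multiplicative (Fin n → ℤ) :=
  FreeGroup.lift fun i => Multiplicative.ofAdd (Pi.single i 1)

/-- The abelianization vector (vector of exponent sums) of a word `u ∈ F_n`. -/
def freeVec {n : ℕ} (u : FreeGroup (Fin n)) : Fin n → ℤ :=
  Multiplicative.toAdd (freeAb n u)

lemma freeVec_one {n : ℕ} : freeVec (1 : FreeGroup (Fin n)) = 0 := by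
  simp [freeVec]

lemma freeVec_mul {n : ℕ} (u v : FreeGroup (Fin n)) :
    freeVec (u * v) = freeVec u + freeVec v := by
  simp [freeVec, map_mul]

lemma freeVec_inv {n : ℕ} (u : FreeGroup (Fin n)) : freeVec u⁻¹ = -freeVec u := by
  simp [freeVec, map_inv]

/-- The subgroup `K = {u ∈ Fix φ | ∃ a ∈ ℤ^m, a = aQ + uP}` of `F_n`. -/
def Kgrp (n m : ℕ) (φ : FreeGroup (Fin n) →* FreeGroup (Fin n))
    (Q : Matrix (Fin m) (Fin m) ℤ) (P : Matrix (Fin n) (Fin m) ℤ) :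
    Subgroup (FreeGroup (Fin n)) where
  carrier := {u | φ u = u ∧
    ∃ a : Fin m → ℤ, a = Matrix.vecMul a Q + Matrix.vecMul (freeVec u) P}
  one_mem' := ⟨map_one φ, 0, by simp [freeVec_one, Matrix.zero_vecMul]⟩
  mul_mem' := by
    rintro u v ⟨hu, au, hau⟩ ⟨hv, av, hav⟩
    refine ⟨by rw [map_mul, hu, hv], au + av, ?_⟩
    conv_lhs => rw [hau, hav]
    rw [freeVec_mul, Matrix.add_vecMul, Matrix.add_vecMul]
    abel
  inv_mem' := by
    rintro u ⟨hu, au, hau⟩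
    refine ⟨by rw [map_inv, hu], -au, ?_⟩
    conv_lhs => rw [hau]
    rw [freeVec_inv, Matrix.neg_vecMul, Matrix.neg_vecMul]
    abel

/-- The subgroup `A = {a ∈ ℤ^m | a = aQ}` of `ℤ^m`. -/
def Agrp (m : ℕ) (Q : Matrix (Fin m) (Fin m) ℤ) : Subgroup (ZPowGrp m) where
  carrier := {a | Multiplicative.toAdd a = Matrix.vecMul (Multiplicative.toAdd a) Q}
  one_mem' := by simp [Matrix.zero_vecMul]
  mul_mem' := by
    intro a b ha hb
    simp only [Set.mem_setOf_eq, toAdd_mul] at *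
    rw [Matrix.add_vecMul, ← ha, ← hb]
  inv_mem' := by
    intro a ha
    simp only [Set.mem_setOf_eq, toAdd_inv] at *
    rw [Matrix.neg_vecMul, ← ha]

section Aux

variable {n m : ℕ} (Q : Matrix (Fin m) (Fin m) ℤ) (P : Matrix (Fin n) (Fin m) ℤ)

/-- `a` is a witness for `u`: `a = aQ + uP`. -/
def IsWit (u : FreeGroup (Fin n)) (a : Fin m → ℤ) : Prop :=
  a = Matrix.vecMul a Q + Matrix.vecMul (freeVec u) P

lemma isWit_mul {u v : FreeGroup (Fin n)} {a b : Fin m → ℤ}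
    (ha : IsWit Q P u a) (hb : IsWit Q P v b) : IsWit Q P (u * v) (a + b) := by
  unfold IsWit at *
  conv_lhs => rw [ha, hb]
  rw [freeVec_mul, Matrix.add_vecMul, Matrix.add_vecMul]
  abel

lemma isWit_sub {u : FreeGroup (Fin n)} {a b : Fin m → ℤ}
    (ha : IsWit Q P u a) (hb : IsWit Q P u b) :
    a - b = Matrix.vecMul (a - b) Q := by
  rw [Matrix.sub_vecMul]
  conv_lhs => rw [ha, hb]
  abel

lemma isWit_of_sub {u : FreeGroup (Fin n)} {a b : Fin m → ℤ}
    (ha : IsWit Q P u a) (h : b - a = Matrix.vecMul (b - a) Q) :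
    IsWit Q P u b := by
  unfold IsWit at *
  calc b = (b - a) + a := by abel
    _ = Matrix.vecMul (b - a) Q + (Matrix.vecMul a Q + Matrix.vecMul (freeVec u) P) := by
        rw [← h, ← ha]
    _ = Matrix.vecMul ((b - a) + a) Q + Matrix.vecMul (freeVec u) P := by
        rw [Matrix.add_vecMul]; abel
    _ = Matrix.vecMul b Q + Matrix.vecMul (freeVec u) P := by rw [sub_add_cancel]

/-- The subgroup `A` as a `ℤ`-submodule of `ℤ^m`. -/
def Asub : Submodule ℤ (Fin m → ℤ) := LinearMap.ker (LinearMap.id - Q.vecMulLinear)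

lemma mem_Asub {a : Fin m → ℤ} : a ∈ Asub Q ↔ a = Matrix.vecMul a Q := by
  simp [Asub, LinearMap.mem_ker, sub_eq_zero]

/-- The rank of `A`. -/
noncomputable def sA : ℕ := (Submodule.basisOfPid (Pi.basisFun ℤ (Fin m)) (Asub Q)).1

/-- A basis of `A`. -/
noncomputable def basisA : Module.Basis (Fin (sA Q)) ℤ (Asub Q) :=
  (Submodule.basisOfPid (Pi.basisFun ℤ (Fin m)) (Asub Q)).2

lemma sA_le : sA Q ≤ m := by
  have h1 : Module.finrank ℤ (Asub Q) ≤ Module.finrank ℤ (Fin m → ℤ) :=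
    Submodule.finrank_le (Asub Q)
  rw [Module.finrank_eq_card_basis (basisA Q), Module.finrank_pi] at h1
  simpa using h1

lemma mem_Agrp_iff {a : ZPowGrp m} :
    a ∈ Agrp m Q ↔ Multiplicative.toAdd a ∈ Asub Q := by
  rw [mem_Asub]; rfl

/-- `A` as a subgroup is isomorphic to `Multiplicative` of the submodule. -/
def e1 : Agrp m Q ≃* Multiplicative (Asub Q) where
  toFun a := Multiplicative.ofAdd ⟨Multiplicative.toAdd a.1, (mem_Agrp_iff Q).1 a.2⟩
  invFun b := ⟨Multiplicative.ofAdd ((Multiplicative.toAdd b : Asub Q) : Fin m → ℤ),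
    (mem_Agrp_iff Q).2 (Multiplicative.toAdd b).2⟩
  left_inv a := Subtype.ext rfl
  right_inv b := rfl
  map_mul' a b := rfl

/-- `A ≅ ℤ^s`. -/
noncomputable def eA : Agrp m Q ≃* ZPowGrp (sA Q) :=
  (e1 Q).trans (AddEquiv.toMultiplicative (basisA Q).equivFun.toAddEquiv)

variable (φ : FreeGroup (Fin n) →* FreeGroup (Fin n))

lemma mem_Kgrp_iff {u : FreeGroup (Fin n)} :
    u ∈ Kgrp n m φ Q P ↔ φ u = u ∧ ∃ a, IsWit Q P u a := Iff.rfl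

/-- A chosen witness for an element of `K`. -/
noncomputable def witOf (u : Kgrp n m φ Q P) : Fin m → ℤ :=
  (((mem_Kgrp_iff Q P φ).1 u.2).2).choose

lemma witOf_spec (u : Kgrp n m φ Q P) : IsWit Q P (u : FreeGroup (Fin n)) (witOf Q P φ u) :=
  (((mem_Kgrp_iff Q P φ).1 u.2).2).choose_spec

/-- The class map `K →* ℤ^m/A`. -/
noncomputable def fcls : Kgrp n m φ Q P →* Multiplicative ((Fin m → ℤ) ⧸ Asub Q) where
  toFun u := Multiplicative.ofAdd ((Asub Q).mkQ (witOf Q P φ u))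
  map_one' := by
    have h := witOf_spec Q P φ 1
    have : witOf Q P φ 1 ∈ Asub Q := by
      rw [mem_Asub]
      have : ((1 : Kgrp n m φ Q P) : FreeGroup (Fin n)) = 1 := rfl
      unfold IsWit at h
      rw [this, freeVec_one, Matrix.zero_vecMul, add_zero] at h
      exact h
    simpa [Submodule.Quotient.mk_eq_zero] using congrArg Multiplicative.ofAdd
      (((Submodule.Quotient.mk_eq_zero _).2 this : (Asub Q).mkQ (witOf Q P φ 1) = 0))
  map_mul' u v := by
    have h1 : IsWit Q P ((u * v : Kgrp n m φ Q P) : FreeGroup (Fin n))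
        (witOf Q P φ u + witOf Q P φ v) :=
      isWit_mul Q P (witOf_spec Q P φ u) (witOf_spec Q P φ v)
    have h2 := witOf_spec Q P φ (u * v)
    have hmem : witOf Q P φ (u * v) - (witOf Q P φ u + witOf Q P φ v) ∈ Asub Q := by
      rw [mem_Asub]
      exact isWit_sub Q P h2 h1
    have : (Asub Q).mkQ (witOf Q P φ (u * v)) = (Asub Q).mkQ (witOf Q P φ u + witOf Q P φ v) :=
      (Submodule.Quotient.eq _).2 hmem
    simp only [this, map_add]
    rfl

/-- A homomorphic choice of witnesses `K →* ℤ^m` (multiplicatively). -/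
noncomputable def glift : Kgrp n m φ Q P →* Multiplicative (Fin m → ℤ) :=
  IsFreeGroup.lift (fun x => Multiplicative.ofAdd (witOf Q P φ (IsFreeGroup.of x)))

lemma glift_isWit (u : Kgrp n m φ Q P) :
    IsWit Q P (u : FreeGroup (Fin n)) (Multiplicative.toAdd (glift Q P φ u)) := by
  set πM : Multiplicative (Fin m → ℤ) →* Multiplicative ((Fin m → ℤ) ⧸ Asub Q) :=
    AddMonoidHom.toMultiplicative (Asub Q).mkQ.toAddMonoidHom with hπM
  have hcomp : πM.comp (glift Q P φ) = fcls Q P φ := by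
    apply IsFreeGroup.ext_hom
    intro x
    simp only [MonoidHom.comp_apply, glift, IsFreeGroup.lift_of]
    rfl
  have := congrArg (fun F => F u) hcomp
  simp only [MonoidHom.comp_apply] at this
  have hq : (Asub Q).mkQ (Multiplicative.toAdd (glift Q P φ u)) = (Asub Q).mkQ (witOf Q P φ u) := by
    have := congrArg Multiplicative.toAdd this
    simpa [πM, fcls] using this
  have hmem : Multiplicative.toAdd (glift Q P φ u) - witOf Q P φ u ∈ Asub Q :=
    (Submodule.Quotient.eq _).1 hq
  exact isWit_of_sub Q P (witOf_spec Q P φ u) ((mem_Asub Q).1 hmem)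

end Aux
theorem stmt7 (n m : ℕ) (hn : 2 ≤ n) (hm : 1 ≤ m)
    (φ : FreeGroup (Fin n) →* FreeGroup (Fin n))
    (Q : Matrix (Fin m) (Fin m) ℤ) (P : Matrix (Fin n) (Fin m) ℤ)
    (Ψ : (FreeGroup (Fin n) × ZPowGrp m) →* (FreeGroup (Fin n) × ZPowGrp m))
    (hΨ : ∀ x : FreeGroup (Fin n) × ZPowGrp m,
      Ψ x = (φ x.1, Multiplicative.ofAdd
        (Matrix.vecMul (Multiplicative.toAdd x.2) Q + Matrix.vecMul (freeVec x.1) P))) :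
    Kgrp n m φ Q P ≤ fixedSubgroup φ ∧
    ((Kgrp n m φ Q P).subgroupOf (fixedSubgroup φ)).Normal ∧
    ∃ s ≤ m, Nonempty (Agrp m Q ≃* ZPowGrp s) ∧
      Nonempty (fixedSubgroup Ψ ≃* (Kgrp n m φ Q P × Agrp m Q)) ∧
      Nonempty (fixedSubgroup Ψ ≃* (Kgrp n m φ Q P × ZPowGrp s)) := by
  have hK : Kgrp n m φ Q P ≤ fixedSubgroup φ := fun u hu => hu.1
  have hNormal : ((Kgrp n m φ Q P).subgroupOf (fixedSubgroup φ)).Normal := by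
    constructor
    intro k hk g
    rw [Subgroup.mem_subgroupOf] at hk ⊢
    obtain ⟨hk1, a, ha⟩ := hk
    have hcoe : ((g * k * g⁻¹ : fixedSubgroup φ) : FreeGroup (Fin n))
        = (g : FreeGroup (Fin n)) * k * (g : FreeGroup (Fin n))⁻¹ := rfl
    refine ⟨?_, a, ?_⟩
    · rw [hcoe, map_mul, map_mul, map_inv, g.2, hk1]
    · have hv : freeVec ((g * k * g⁻¹ : fixedSubgroup φ) : FreeGroup (Fin n))
          = freeVec (k : FreeGroup (Fin n)) := by
        rw [hcoe, freeVec_mul, freeVec_mul, freeVec_inv]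
        abel
      rw [hv]
      exact ha
  have hfix : ∀ x : FreeGroup (Fin n) × ZPowGrp m, x ∈ fixedSubgroup Ψ ↔
      φ x.1 = x.1 ∧ IsWit Q P x.1 (Multiplicative.toAdd x.2) := by
    intro x
    have h0 : x ∈ fixedSubgroup Ψ ↔ Ψ x = x := Iff.rfl
    rw [h0, hΨ x, Prod.ext_iff]
    unfold IsWit
    constructor
    · rintro ⟨h1, h2⟩
      refine ⟨h1, ?_⟩
      have h3 := congrArg Multiplicative.toAdd h2
      simpa using h3.symm
    · rintro ⟨h1, h2⟩
      refine ⟨h1, ?_⟩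
      show Multiplicative.ofAdd _ = x.2
      rw [← h2]
      simp
  have memK : ∀ x : fixedSubgroup Ψ, (x : FreeGroup (Fin n) × ZPowGrp m).1 ∈ Kgrp n m φ Q P :=
    fun x => ⟨((hfix _).1 x.2).1, _, ((hfix _).1 x.2).2⟩
  let toK : fixedSubgroup Ψ → Kgrp n m φ Q P := fun x => ⟨(x : FreeGroup (Fin n) × ZPowGrp m).1, memK x⟩
  let g := glift Q P φ
  have gw : ∀ u : Kgrp n m φ Q P,
      IsWit Q P (u : FreeGroup (Fin n)) (Multiplicative.toAdd (g u)) := glift_isWit Q P φ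
  have isoKA : fixedSubgroup Ψ ≃* (Kgrp n m φ Q P × Agrp m Q) := by
    refine
      { toFun := fun x => (toK x,
          ⟨Multiplicative.ofAdd (Multiplicative.toAdd (x : FreeGroup (Fin n) × ZPowGrp m).2
            - Multiplicative.toAdd (g (toK x))), ?_⟩)
        invFun := fun p => ⟨((p.1 : FreeGroup (Fin n)),
          Multiplicative.ofAdd (Multiplicative.toAdd (p.2 : ZPowGrp m)
            + Multiplicative.toAdd (g p.1))), ?_⟩
        left_inv := ?_
        right_inv := ?_
        map_mul' := ?_ }
    · exact (mem_Agrp_iff Q).2 ((mem_Asub Q).2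
        (by simpa using isWit_sub Q P ((hfix _).1 x.2).2 (gw (toK x))))
    · rw [hfix]
      refine ⟨p.1.2.1, ?_⟩
      simp only [toAdd_ofAdd]
      apply isWit_of_sub Q P (gw p.1)
      simpa using (mem_Asub Q).1 ((mem_Agrp_iff Q).1 p.2.2)
    · intro x
      apply Subtype.ext
      apply Prod.ext
      · rfl
      · show Multiplicative.ofAdd
          (Multiplicative.toAdd (Multiplicative.ofAdd
              (Multiplicative.toAdd (x : FreeGroup (Fin n) × ZPowGrp m).2
                - Multiplicative.toAdd (g (toK x))))
            + Multiplicative.toAdd (g (toK x))) = (x : FreeGroup (Fin n) × ZPowGrp m).2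
        simp
    · intro p
      apply Prod.ext
      · apply Subtype.ext; rfl
      · apply Subtype.ext
        show Multiplicative.ofAdd
          (Multiplicative.toAdd (Multiplicative.ofAdd
              (Multiplicative.toAdd (p.2 : ZPowGrp m) + Multiplicative.toAdd (g p.1)))
            - Multiplicative.toAdd (g p.1)) = (p.2 : ZPowGrp m)
        simp
    · intro x y
      apply Prod.ext
      · apply Subtype.ext; rfl
      · apply Subtype.ext
        show Multiplicative.ofAdd
            (Multiplicative.toAdd (((x * y : fixedSubgroup Ψ) : FreeGroup (Fin n) × ZPowGrp m).2)
              - Multiplicative.toAdd (g (toK (x * y))))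
          = Multiplicative.ofAdd
              (Multiplicative.toAdd ((x : FreeGroup (Fin n) × ZPowGrp m).2)
                - Multiplicative.toAdd (g (toK x)))
            * Multiplicative.ofAdd
              (Multiplicative.toAdd ((y : FreeGroup (Fin n) × ZPowGrp m).2)
                - Multiplicative.toAdd (g (toK y)))
        have h1 : g (toK (x * y)) = g (toK x) * g (toK y) := by
          rw [show toK (x * y) = toK x * toK y from rfl, map_mul]
        have h2 : ((x * y : fixedSubgroup Ψ) : FreeGroup (Fin n) × ZPowGrp m).2
            = (x : FreeGroup (Fin n) × ZPowGrp m).2 * (y : FreeGroup (Fin n) × ZPowGrp m).2 := rfl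
        rw [h1, h2, toAdd_mul, toAdd_mul, ← ofAdd_add]
        congr 1
        abel
  refine ⟨hK, hNormal, sA Q, sA_le Q, ⟨eA Q⟩, ⟨isoKA⟩,
    ⟨isoKA.trans (MulEquiv.prodCongr (MulEquiv.refl _) (eA Q))⟩⟩
end

section
/- Let n ≥ 2 and t > n. Let F_n be free on x_1,…,x_n, let φ: F_n → F_n be the endomorphism with φ(x_1) = x_1, φ(x_2) = x_2, and φ(x_i) = x_i^{-1} for i > 2, and let γ(u) denote the exponent sum of x_1 in u. Then the endomorphism Ψ of F_n × Z defined by Ψ(u, v) = (φ(u), tv + γ(u)) has fixed subgroup Fix Ψ isomorphic to the free group F_t of rank t. -/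
/-- The free abelian group `ℤ^m` of rank `m`, written multiplicatively. -/
abbrev ZPowFreeAb (m : ℕ) := Multiplicative (Fin m → ℤ)


namespace S9
open List

set_option linter.unusedSectionVars false

variable {α : Type*} [DecidableEq α]

/-- no cancellation between adjacent letters -/
def Rd (x y : α × Bool) : Prop := ¬(x.1 = y.1 ∧ y.2 = !x.2)

theorem reduce_eq_self_of_chain' : ∀ {L : List (α × Bool)}, Chain' Rd L → FreeGroup.reduce L = L
  | [], _ => rfl
  | [x], _ => rfl
  | x :: y :: L, h => by
    have h1 : Rd x y := (List.isChain_cons_cons.mp h).1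
    have h2 := reduce_eq_self_of_chain' (List.isChain_cons_cons.mp h).2
    rw [FreeGroup.reduce.cons, h2]
    simp only [Rd] at h1
    have h1' : ¬(x.1 = y.1 ∧ x.2 = !y.2) := fun ⟨ha, hb⟩ => h1 ⟨ha, by
      cases hx2 : x.2 <;> cases hy2 : y.2 <;> simp_all⟩
    simp [h1']

theorem chain'_of_reduce_eq_self : ∀ {L : List (α × Bool)}, FreeGroup.reduce L = L → Chain' Rd L := by
  intro L
  induction L with
  | nil => intro _; exact List.isChain_nil
  | cons x L ih =>
    intro h
    rcases L with _ | ⟨y, L⟩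
    · exact List.isChain_singleton _
    · -- key: show reduce (y :: L) = y :: L
      by_cases hr : FreeGroup.reduce (y :: L) = y :: L
      · refine List.isChain_cons_cons.mpr ⟨?_, ih hr⟩
        intro hxy
        obtain ⟨h1, h2⟩ := hxy
        have hx : x = (y.1, !y.2) := by
          cases x; cases y; simp_all
        have : FreeGroup.Red.Step (x :: y :: L) L := by
          subst hx
          cases y
          exact FreeGroup.Red.Step.cons_not_rev
        have := FreeGroup.reduce.Step.eq this
        rw [h] at this
        have hlen := congrArg List.length this
        have hlen2 := FreeGroup.Red.length_le (FreeGroup.reduce.red (L := L))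
        simp at hlen
        omega
      · exfalso
        -- reduce (x :: y :: L) = x :: y :: L but reduce (y::L) ≠ y :: L.
        -- from reduce.cons, reduce (x::y::L) is built from reduce (y::L).
        rw [FreeGroup.reduce.cons] at h
        rcases hR : FreeGroup.reduce (y :: L) with _ | ⟨hd, tl⟩
        · rw [hR] at h; simp at h
        · rw [hR] at h
          by_cases hc : x.1 = hd.1 ∧ x.2 = !hd.2
          · simp [hc] at h
            have := congrArg List.length h
            have hlen := FreeGroup.Red.length_le (FreeGroup.reduce.red (L := y :: L))
            rw [hR] at hlen
            simp at this hlen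
            omega
          · simp [hc] at h
            exact hr (hR.trans (by rw [h.1, h.2]))

theorem toWord_chain' (w : FreeGroup α) : Chain' Rd w.toWord :=
  chain'_of_reduce_eq_self (FreeGroup.reduce_toWord w)

theorem toWord_mk_of_chain' {L : List (α × Bool)} (h : Chain' Rd L) :
    (FreeGroup.mk L).toWord = L := by
  rw [FreeGroup.toWord_mk, reduce_eq_self_of_chain' h]


/-- the reduced word for `a^z`, `a = of 0` -/
def zList (z : ℤ) : List (Fin 2 × Bool) :=
  if 0 ≤ z then List.replicate z.toNat ((0 : Fin 2), true)
  else List.replicate (-z).toNat ((0 : Fin 2), false)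

theorem chain'_replicate_same (n : ℕ) (x : α × Bool) : Chain' Rd (List.replicate n x) := by
  apply List.isChain_replicate_of_rel
  simp [Rd]

theorem chain'_zList (z : ℤ) : Chain' Rd (zList z) := by
  unfold zList; split <;> exact chain'_replicate_same _ _

theorem mem_zList {x : Fin 2 × Bool} {z : ℤ} (h : x ∈ zList z) : x.1 = 0 := by
  unfold zList at h
  split at h <;> rw [List.eq_of_mem_replicate h]

theorem zList_nonneg {z : ℤ} (h : 0 ≤ z) : zList z = List.replicate z.toNat ((0:Fin 2), true) := by
  simp [zList, h]

theorem zList_neg {z : ℤ} (h : z < 0) : zList z = List.replicate (-z).toNat ((0:Fin 2), false) := by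
  simp [zList, not_le.mpr h]

theorem zList_zero : zList 0 = [] := by simp [zList]

theorem head?_zList_pos {z : ℤ} (h : 0 < z) : (zList z).head? = some ((0:Fin 2), true) := by
  rw [zList_nonneg h.le]
  obtain ⟨n, hn⟩ : ∃ n : ℕ, z.toNat = n + 1 := ⟨z.toNat - 1, by omega⟩
  rw [hn, List.replicate_succ]; rfl

theorem head?_zList_neg {z : ℤ} (h : z < 0) : (zList z).head? = some ((0:Fin 2), false) := by
  rw [zList_neg h]
  obtain ⟨n, hn⟩ : ∃ n : ℕ, (-z).toNat = n + 1 := ⟨(-z).toNat - 1, by omega⟩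
  rw [hn, List.replicate_succ]; rfl

theorem mk_replicate_true (n : ℕ) (i : Fin 2) :
    FreeGroup.mk (List.replicate n (i, true)) = FreeGroup.of i ^ n := by
  have := FreeGroup.toWord_of_pow i n
  have h2 := congrArg FreeGroup.mk this
  rw [FreeGroup.mk_toWord] at h2
  exact h2.symm

theorem mk_replicate_false (n : ℕ) (i : Fin 2) :
    FreeGroup.mk (List.replicate n (i, false)) = FreeGroup.of i ^ (-(n:ℤ)) := by
  have : List.replicate n (i, false) = FreeGroup.invRev (List.replicate n (i, true)) := by
    simp [FreeGroup.invRev, List.map_replicate, List.reverse_replicate]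
  rw [this, ← FreeGroup.inv_mk, mk_replicate_true, zpow_neg, zpow_natCast]

theorem mk_zList (z : ℤ) : FreeGroup.mk (zList z) = FreeGroup.of (0 : Fin 2) ^ z := by
  by_cases h : 0 ≤ z
  · rw [zList_nonneg h, mk_replicate_true]
    rw [← zpow_natCast, Int.toNat_of_nonneg h]
  · push_neg at h
    rw [zList_neg h, mk_replicate_false]
    congr 1
    omega

theorem fin2_eq_one {i : Fin 2} (h : i ≠ 0) : i = 1 := by fin_cases i <;> simp_all

theorem zList_cons_true {z : ℤ} (h : 0 ≤ z) :
    ((0:Fin 2), true) :: zList z = zList (z + 1) := by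
  rw [zList_nonneg h, zList_nonneg (by omega)]
  have : (z+1).toNat = z.toNat + 1 := by omega
  rw [this, List.replicate_succ]

theorem zList_cons_false {z : ℤ} (h : z ≤ 0) :
    ((0:Fin 2), false) :: zList z = zList (z - 1) := by
  rcases h.lt_or_eq with h' | rfl
  · rw [zList_neg h', zList_neg (by omega)]
    have : (-(z-1)).toNat = (-z).toNat + 1 := by omega
    rw [this, List.replicate_succ]
  · rw [zList_zero, zList_neg (by omega)]
    rfl

/-- decomposition of a reduced word into maximal `a^z` prefix and rest -/
theorem decomp_list : ∀ (L : List (Fin 2 × Bool)), Chain' Rd L →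
    ∃ (z : ℤ) (L' : List (Fin 2 × Bool)), L = zList z ++ L' ∧ Chain' Rd L' ∧
      ∀ x ∈ L'.head?, x.1 = (1 : Fin 2) := by
  intro L
  induction L with
  | nil => intro _; exact ⟨0, [], by simp [zList_zero], List.isChain_nil, by simp⟩
  | cons x L ih =>
    intro h
    have hch := (List.isChain_cons.mp h).2
    have hR := (List.isChain_cons.mp h).1
    obtain ⟨z, L', hL, hch', hhd⟩ := ih hch
    by_cases hx : x.1 = (0 : Fin 2)
    · obtain ⟨c, rfl⟩ : ∃ c, x = ((0 : Fin 2), c) := ⟨x.2, by rw [← hx]⟩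
      cases c
      · -- c = false : need z ≤ 0
        have hz : z ≤ 0 := by
          by_contra hz
          push_neg at hz
          obtain ⟨m, hm⟩ : ∃ m : ℕ, z.toNat = m + 1 := ⟨z.toNat - 1, by omega⟩
          rw [zList_nonneg hz.le, hm, List.replicate_succ] at hL
          rw [hL] at hR
          exact hR _ rfl ⟨rfl, rfl⟩
        exact ⟨z - 1, L', by rw [hL, ← zList_cons_false hz]; rfl, hch', hhd⟩
      · -- c = true : need 0 ≤ z
        have hz : 0 ≤ z := by
          by_contra hz
          push_neg at hz
          obtain ⟨m, hm⟩ : ∃ m : ℕ, (-z).toNat = m + 1 := ⟨(-z).toNat - 1, by omega⟩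
          rw [zList_neg hz, hm, List.replicate_succ] at hL
          rw [hL] at hR
          exact hR _ rfl ⟨rfl, rfl⟩
        exact ⟨z + 1, L', by rw [hL, ← zList_cons_true hz]; rfl, hch', hhd⟩
    · exact ⟨0, x :: L, by simp [zList_zero], h, by
        intro y hy
        simp only [List.head?_cons, Option.mem_some_iff] at hy
        subst hy
        exact fin2_eq_one hx⟩

theorem decomp (w : FreeGroup (Fin 2)) :
    ∃ (z : ℤ) (L' : List (Fin 2 × Bool)), w.toWord = zList z ++ L' ∧
      w = FreeGroup.of (0:Fin 2) ^ z * FreeGroup.mk L' ∧ Chain' Rd L' ∧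
      ∀ x ∈ L'.head?, x.1 = (1 : Fin 2) := by
  obtain ⟨z, L', hL, hch', hhd⟩ := decomp_list w.toWord (toWord_chain' w)
  refine ⟨z, L', hL, ?_, hch', hhd⟩
  conv_lhs => rw [← FreeGroup.mk_toWord (x := w)]
  rw [hL, ← FreeGroup.mul_mk, mk_zList]


-- ########## new material ##########

theorem mem_of_getElem? {β : Type*} {l : List β} {a : β} {j : ℕ} (h : l[j]? = some a) : a ∈ l := by
  obtain ⟨hn, rfl⟩ := List.getElem?_eq_some_iff.mp h
  exact List.getElem_mem hn

/-- the Schreier generators -/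
def gg (m : ℕ) (k : Fin (m+1)) : FreeGroup (Fin 2) :=
  if k = 0 then FreeGroup.of 0 ^ (m : ℤ)
  else FreeGroup.of 0 ^ (((k:ℕ) - 1 : ℕ) : ℤ) * FreeGroup.of 1 *
    (FreeGroup.of 0 ^ (((k:ℕ) - 1 : ℕ) : ℤ))⁻¹

def X0set (m : ℕ) : Set (FreeGroup (Fin 2)) :=
  {w | w.toWord ≠ [] ∧ ∀ x ∈ w.toWord.take m, x = ((0:Fin 2), true)}
def Y0set : Set (FreeGroup (Fin 2)) :=
  {w | ∀ x ∈ w.toWord.head?, x = ((0:Fin 2), false)}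
def XYk (r : ℕ) (c : Bool) : Set (FreeGroup (Fin 2)) :=
  {w | w.toWord.take (r+1) = List.replicate r ((0:Fin 2), true) ++ [((1:Fin 2), c)]}

def XX (m : ℕ) (k : Fin (m+1)) : Set (FreeGroup (Fin 2)) :=
  if k = 0 then X0set m else XYk ((k:ℕ) - 1) true
def YY (m : ℕ) (k : Fin (m+1)) : Set (FreeGroup (Fin 2)) :=
  if k = 0 then Y0set else XYk ((k:ℕ) - 1) false

-- positional consequences
theorem XYk_getElem_lt {r : ℕ} {c : Bool} {w : FreeGroup (Fin 2)} (hw : w ∈ XYk r c)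
    {j : ℕ} (hj : j < r) : w.toWord[j]? = some ((0:Fin 2), true) := by
  have h1 : w.toWord[j]? = (w.toWord.take (r+1))[j]? := by
    rw [List.getElem?_take, if_pos (by omega)]
  rw [h1, hw, List.getElem?_append_left (by simp [List.length_replicate]; omega),
    List.getElem?_replicate, if_pos hj]

theorem XYk_getElem_eq {r : ℕ} {c : Bool} {w : FreeGroup (Fin 2)} (hw : w ∈ XYk r c) :
    w.toWord[r]? = some ((1:Fin 2), c) := by
  have h1 : w.toWord[r]? = (w.toWord.take (r+1))[r]? := by
    rw [List.getElem?_take, if_pos (by omega)]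
  rw [h1, hw, List.getElem?_append_right (by simp [List.length_replicate])]
  simp

theorem X0_getElem {m : ℕ} {w : FreeGroup (Fin 2)} (hw : w ∈ X0set m)
    {j : ℕ} (hj : j < m) {x : Fin 2 × Bool} (hx : w.toWord[j]? = some x) :
    x = ((0:Fin 2), true) := by
  apply hw.2
  apply mem_of_getElem? (j := j)
  rw [List.getElem?_take, if_pos hj, hx]

theorem Y0_not_mem {w : FreeGroup (Fin 2)} {x : Fin 2 × Bool}
    (hx : w.toWord[0]? = some x) (hne : x ≠ ((0:Fin 2), false)) : w ∉ Y0set := by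
  intro hw
  exact hne (hw x (by rw [List.head?_eq_getElem?, hx]; rfl))

-- ### key multiplication lemmas ###

theorem key_k (r : ℕ) (c : Bool) (w : FreeGroup (Fin 2)) (hw : w ∉ XYk r (!c)) :
    (FreeGroup.of (0:Fin 2) ^ (r:ℤ) * FreeGroup.mk [((1:Fin 2), c)] *
      (FreeGroup.of (0:Fin 2) ^ (r:ℤ))⁻¹) * w ∈ XYk r c := by
  obtain ⟨z, L', hL, hw2, hch, hhd⟩ := decomp w
  set P : List (Fin 2 × Bool) := List.replicate r ((0:Fin 2), true) ++ [((1:Fin 2), c)] with hP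
  have hprod : (FreeGroup.of (0:Fin 2) ^ (r:ℤ) * FreeGroup.mk [((1:Fin 2), c)] *
      (FreeGroup.of (0:Fin 2) ^ (r:ℤ))⁻¹) * w =
      FreeGroup.mk (P ++ (zList (z - r) ++ L')) := by
    rw [hw2]
    have : (FreeGroup.of (0:Fin 2) ^ (r:ℤ))⁻¹ * (FreeGroup.of (0:Fin 2) ^ z) =
        FreeGroup.of (0:Fin 2) ^ (z - r) := by
      rw [← zpow_neg, ← zpow_add]; ring_nf
    calc (FreeGroup.of (0:Fin 2) ^ (r:ℤ) * FreeGroup.mk [((1:Fin 2), c)] *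
      (FreeGroup.of (0:Fin 2) ^ (r:ℤ))⁻¹) * (FreeGroup.of (0:Fin 2) ^ z * FreeGroup.mk L')
        = FreeGroup.of (0:Fin 2) ^ (r:ℤ) * FreeGroup.mk [((1:Fin 2), c)] *
          (FreeGroup.of (0:Fin 2) ^ (z - r)) * FreeGroup.mk L' := by
          rw [← this]; group
      _ = FreeGroup.mk (zList (r:ℤ)) * FreeGroup.mk [((1:Fin 2), c)] *
          FreeGroup.mk (zList (z - r)) * FreeGroup.mk L' := by rw [mk_zList, mk_zList]
      _ = FreeGroup.mk (P ++ (zList (z - r) ++ L')) := by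
          rw [FreeGroup.mul_mk, FreeGroup.mul_mk, FreeGroup.mul_mk]
          congr 1
          rw [zList_nonneg (by positivity), Int.toNat_natCast, hP]
          simp
  -- chain' of the result
  have hchain : Chain' Rd (P ++ (zList (z - r) ++ L')) := by
    rw [Chain', List.isChain_append]
    refine ⟨?_, ?_, ?_⟩
    · -- chain' P
      rw [hP, List.isChain_append]
      refine ⟨chain'_replicate_same _ _, List.isChain_singleton _, ?_⟩
      intro x hx y hy
      have := List.eq_of_mem_replicate (List.mem_of_mem_getLast? hx)
      simp only [List.head?_cons, Option.mem_some_iff] at hy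
      subst hy this
      intro ⟨h1, _⟩
      exact absurd h1 (by simp)
    · -- chain' (zList (z-r) ++ L')
      rw [List.isChain_append]
      refine ⟨chain'_zList _, hch, ?_⟩
      intro x hx y hy
      have hx0 : x.1 = 0 := mem_zList (List.mem_of_mem_getLast? hx)
      have hy1 : y.1 = 1 := hhd y hy
      intro ⟨h1, _⟩
      rw [hx0, hy1] at h1
      exact absurd h1 (by decide)
    · -- junction : last of P is (1,c)
      intro x hx y hy
      have hx' : x = ((1:Fin 2), c) := by
        rw [hP, List.getLast?_append] at hx
        simp at hx
        exact hx.symm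
      subst hx'
      by_cases hz : z - r = 0
      · -- head y comes from L'
        rw [hz, zList_zero, List.nil_append] at hy
        have hy1 : y.1 = 1 := hhd y hy
        obtain ⟨c', rfl⟩ : ∃ c', y = ((1:Fin 2), c') := ⟨y.2, by rw [← hy1]⟩
        intro ⟨_, h2⟩
        -- then w ∈ XYk r (!c)
        apply hw
        have hzr : z = (r:ℤ) := by omega
        show w.toWord.take (r+1) = _
        rw [hL, hzr, zList_nonneg (by positivity), Int.toNat_natCast]
        rcases List.head?_eq_some_iff.mp hy with ⟨t', ht'⟩
        have hc' : c' = !c := h2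
        rw [ht', hc']
        rw [show List.replicate r ((0:Fin 2), true) ++ ((1:Fin 2), !c) :: t' =
          (List.replicate r ((0:Fin 2), true) ++ [((1:Fin 2), !c)]) ++ t' by simp]
        rw [List.take_append_of_le_length (by simp)]
        exact List.take_of_length_le (by simp)
      · -- head y comes from zList (z - r), has first coord 0
        rw [List.head?_append_of_ne_nil _ (by
            intro hnil
            rcases lt_trichotomy (z - (r:ℤ)) 0 with h | h | h
            · rw [zList_neg h] at hnil; simp at hnil; omega
            · exact hz h
            · rw [zList_nonneg h.le] at hnil; simp at hnil; omega)] at hy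
        have hy0 : y.1 = 0 := mem_zList (List.mem_of_mem_head? hy)
        intro ⟨h1, _⟩
        rw [hy0] at h1
        exact absurd h1 (by simp)
  rw [hprod]
  show (FreeGroup.mk _).toWord.take (r+1) = _
  rw [toWord_mk_of_chain' hchain]
  rw [List.take_append_of_le_length (by simp [hP])]
  exact List.take_of_length_le (by simp [hP])


theorem chain'_zList_append {z : ℤ} {L' : List (Fin 2 × Bool)} (hch : Chain' Rd L')
    (hhd : ∀ x ∈ L'.head?, x.1 = (1 : Fin 2)) : Chain' Rd (zList z ++ L') := by
  rw [Chain', List.isChain_append]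
  refine ⟨chain'_zList _, hch, ?_⟩
  intro x hx y hy
  have hx0 : x.1 = 0 := mem_zList (List.mem_of_mem_getLast? hx)
  have hy1 : y.1 = 1 := hhd y hy
  intro ⟨h1, _⟩
  rw [hx0, hy1] at h1
  exact absurd h1 (by simp)

theorem key_0X {m : ℕ} (hm : 1 ≤ m) (w : FreeGroup (Fin 2)) (hw : w ∉ Y0set) :
    FreeGroup.of (0:Fin 2) ^ (m:ℤ) * w ∈ X0set m := by
  obtain ⟨z, L', hL, hw2, hch, hhd⟩ := decomp w
  have hz : 0 ≤ z := by
    by_contra hz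
    push_neg at hz
    apply hw
    intro x hx
    rw [hL, List.head?_append_of_ne_nil _ (by
        rw [zList_neg hz]; simp; omega), head?_zList_neg hz] at hx
    simp at hx
    exact hx.symm
  have hprod : FreeGroup.of (0:Fin 2) ^ (m:ℤ) * w = FreeGroup.mk (zList ((m:ℤ) + z) ++ L') := by
    rw [hw2, ← mul_assoc, ← zpow_add, ← FreeGroup.mul_mk, mk_zList]
  have hchain := chain'_zList_append (z := (m:ℤ)+z) hch hhd
  constructor
  · rw [hprod, toWord_mk_of_chain' hchain, zList_nonneg (by omega)]
    intro h1
    have := congrArg List.length h1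
    simp at this
    omega
  · intro x hx
    rw [hprod, toWord_mk_of_chain' hchain, zList_nonneg (by omega),
      List.take_append_of_le_length (by simp; omega)] at hx
    exact List.eq_of_mem_replicate (List.mem_of_mem_take hx)

theorem key_0Y {m : ℕ} (hm : 1 ≤ m) (w : FreeGroup (Fin 2)) (hw : w ∉ X0set m) :
    (FreeGroup.of (0:Fin 2) ^ (m:ℤ))⁻¹ * w ∈ Y0set := by
  obtain ⟨z, L', hL, hw2, hch, hhd⟩ := decomp w
  have hz : z < m := by
    by_contra hz
    push_neg at hz
    apply hw
    constructor
    · rw [hL, zList_nonneg (by omega)]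
      intro h1
      have := congrArg List.length h1
      simp at this
      omega
    · intro x hx
      rw [hL, zList_nonneg (by omega),
        List.take_append_of_le_length (by simp; omega)] at hx
      exact List.eq_of_mem_replicate (List.mem_of_mem_take hx)
  have hprod : (FreeGroup.of (0:Fin 2) ^ (m:ℤ))⁻¹ * w = FreeGroup.mk (zList (z - m) ++ L') := by
    rw [hw2, ← mul_assoc, ← zpow_neg, ← zpow_add,
      show -(m:ℤ) + z = z - m by ring, ← FreeGroup.mul_mk, mk_zList]
  intro x hx
  rw [hprod, toWord_mk_of_chain' (chain'_zList_append hch hhd),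
    List.head?_append_of_ne_nil _ (by rw [zList_neg (by omega)]; simp; omega),
    head?_zList_neg (by omega)] at hx
  simp at hx
  exact hx.symm


-- ### disjointness ###
theorem not_mem_XYk_XYk {r s : ℕ} (hrs : r < s) {c c' : Bool} {w : FreeGroup (Fin 2)}
    (h1 : w ∈ XYk r c) (h2 : w ∈ XYk s c') : False := by
  have a1 := XYk_getElem_eq h1
  have a2 := XYk_getElem_lt h2 hrs
  rw [a1] at a2
  simp at a2

theorem not_mem_XYk_same {r : ℕ} {c c' : Bool} (hcc : c ≠ c') {w : FreeGroup (Fin 2)}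
    (h1 : w ∈ XYk r c) (h2 : w ∈ XYk r c') : False := by
  have a1 := XYk_getElem_eq h1
  have a2 := XYk_getElem_eq h2
  rw [a1] at a2
  simp at a2
  exact hcc a2

theorem not_mem_X0_XYk {m r : ℕ} (hr : r < m) {c : Bool} {w : FreeGroup (Fin 2)}
    (h1 : w ∈ X0set m) (h2 : w ∈ XYk r c) : False := by
  have := X0_getElem h1 hr (XYk_getElem_eq h2)
  simp at this

theorem not_mem_Y0_XYk {r : ℕ} {c : Bool} {w : FreeGroup (Fin 2)}
    (h1 : w ∈ Y0set) (h2 : w ∈ XYk r c) : False := by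
  rcases Nat.eq_zero_or_pos r with rfl | hr
  · exact Y0_not_mem (XYk_getElem_eq h2) (by simp) h1
  · exact Y0_not_mem (XYk_getElem_lt h2 hr) (by simp) h1

theorem not_mem_X0_Y0 {m : ℕ} (hm : 1 ≤ m) {w : FreeGroup (Fin 2)}
    (h1 : w ∈ X0set m) (h2 : w ∈ Y0set) : False := by
  rcases hL : w.toWord with _ | ⟨x, tl⟩
  · exact h1.1 hL
  · have hx : w.toWord[0]? = some x := by rw [hL]; simp
    have := X0_getElem h1 hm hx
    subst this
    exact Y0_not_mem hx (by simp) h2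

theorem inv_of_eq : (FreeGroup.of (1:Fin 2))⁻¹ = FreeGroup.mk [((1:Fin 2), false)] := by
  rw [show FreeGroup.of (1:Fin 2) = FreeGroup.mk [((1:Fin 2), true)] from rfl,
    FreeGroup.inv_mk]
  rfl

theorem r_lt {m : ℕ} {k : Fin (m+1)} (hk : k ≠ 0) : (k:ℕ) - 1 < m := by
  have := k.isLt
  have : (k:ℕ) ≠ 0 := fun h => hk (Fin.ext h)
  omega

theorem r_inj {m : ℕ} {k l : Fin (m+1)} (hk : k ≠ 0) (hl : l ≠ 0) (hkl : k ≠ l) :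
    (k:ℕ) - 1 ≠ (l:ℕ) - 1 := by
  have hk' : (k:ℕ) ≠ 0 := fun h => hk (Fin.ext h)
  have hl' : (l:ℕ) ≠ 0 := fun h => hl (Fin.ext h)
  have : (k:ℕ) ≠ (l:ℕ) := fun h => hkl (Fin.ext h)
  omega

theorem lift_gg_injective (m : ℕ) (hm : 1 ≤ m) :
    Function.Injective (FreeGroup.lift (gg m)) := by
  haveI : Nontrivial (Fin (m+1)) := Fin.nontrivial_iff_two_le.mpr (by omega)
  apply FreeGroup.injective_lift_of_ping_pong (gg m) (XX m) (YY m)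
  · -- nonempty
    intro i
    by_cases hi : i = 0
    · refine ⟨FreeGroup.of 0, ?_⟩
      rw [XX, if_pos hi]
      constructor
      · rw [FreeGroup.toWord_of]; simp
      · intro x hx
        rw [FreeGroup.toWord_of] at hx
        have := List.mem_of_mem_take hx
        simpa using this
    · set r := (i:ℕ) - 1
      refine ⟨FreeGroup.mk (List.replicate r ((0:Fin 2), true) ++ [((1:Fin 2), true)]), ?_⟩
      rw [XX, if_neg hi]
      have hch : Chain' Rd (List.replicate r ((0:Fin 2), true) ++ [((1:Fin 2), true)]) := by
        rw [Chain', List.isChain_append]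
        refine ⟨chain'_replicate_same _ _, List.isChain_singleton _, ?_⟩
        intro x hx y hy
        have := List.eq_of_mem_replicate (List.mem_of_mem_getLast? hx)
        simp only [List.head?_cons, Option.mem_some_iff] at hy
        subst hy this
        intro ⟨h1, _⟩
        exact absurd h1 (by simp)
      show _ ∈ XYk r true
      unfold XYk
      rw [Set.mem_setOf_eq, toWord_mk_of_chain' hch]
      exact List.take_of_length_le (by simp)
  · -- X pairwise disjoint
    intro i j hij
    rw [Function.onFun]
    rw [Set.disjoint_left]
    intro w hwi hwj
    by_cases hi : i = 0
    · subst hi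
      have hj : j ≠ 0 := fun h => hij h.symm
      rw [XX, if_pos rfl] at hwi
      rw [XX, if_neg hj] at hwj
      exact not_mem_X0_XYk (r_lt hj) hwi hwj
    · by_cases hj : j = 0
      · subst hj
        rw [XX, if_pos rfl] at hwj
        rw [XX, if_neg hi] at hwi
        exact not_mem_X0_XYk (r_lt hi) hwj hwi
      · rw [XX, if_neg hi] at hwi
        rw [XX, if_neg hj] at hwj
        rcases lt_or_gt_of_ne (r_inj hi hj hij) with h | h
        · exact not_mem_XYk_XYk h hwi hwj
        · exact not_mem_XYk_XYk h hwj hwi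
  · -- Y pairwise disjoint
    intro i j hij
    rw [Function.onFun]
    rw [Set.disjoint_left]
    intro w hwi hwj
    by_cases hi : i = 0
    · subst hi
      have hj : j ≠ 0 := fun h => hij h.symm
      rw [YY, if_pos rfl] at hwi
      rw [YY, if_neg hj] at hwj
      exact not_mem_Y0_XYk hwi hwj
    · by_cases hj : j = 0
      · subst hj
        rw [YY, if_pos rfl] at hwj
        rw [YY, if_neg hi] at hwi
        exact not_mem_Y0_XYk hwj hwi
      · rw [YY, if_neg hi] at hwi
        rw [YY, if_neg hj] at hwj
        rcases lt_or_gt_of_ne (r_inj hi hj hij) with h | h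
        · exact not_mem_XYk_XYk h hwi hwj
        · exact not_mem_XYk_XYk h hwj hwi
  · -- X and Y disjoint
    intro i j
    rw [Set.disjoint_left]
    intro w hwi hwj
    by_cases hi : i = 0
    · subst hi
      rw [XX, if_pos rfl] at hwi
      by_cases hj : j = 0
      · subst hj
        rw [YY, if_pos rfl] at hwj
        exact not_mem_X0_Y0 hm hwi hwj
      · rw [YY, if_neg hj] at hwj
        exact not_mem_X0_XYk (r_lt hj) hwi hwj
    · rw [XX, if_neg hi] at hwi
      by_cases hj : j = 0
      · subst hj
        rw [YY, if_pos rfl] at hwj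
        exact not_mem_Y0_XYk hwj hwi
      · rw [YY, if_neg hj] at hwj
        by_cases hij : (i:ℕ) - 1 = (j:ℕ) - 1
        · rw [hij] at hwi
          exact not_mem_XYk_same (by simp) hwi hwj
        · rcases lt_or_gt_of_ne hij with h | h
          · exact not_mem_XYk_XYk h hwi hwj
          · exact not_mem_XYk_XYk h hwj hwi
  · -- hX
    intro i
    rintro x ⟨w, hw, rfl⟩
    show gg m i * w ∈ XX m i
    by_cases hi : i = 0
    · subst hi
      rw [XX, if_pos rfl]
      rw [show gg m 0 = FreeGroup.of (0:Fin 2) ^ (m:ℤ) by rw [gg, if_pos rfl]]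
      apply key_0X hm
      rw [YY, if_pos rfl] at hw
      exact hw
    · rw [XX, if_neg hi]
      rw [show gg m i = FreeGroup.of (0:Fin 2) ^ (((i:ℕ)-1:ℕ):ℤ) *
        FreeGroup.mk [((1:Fin 2), true)] * (FreeGroup.of (0:Fin 2) ^ (((i:ℕ)-1:ℕ):ℤ))⁻¹
        by rw [gg, if_neg hi]; rfl]
      apply key_k
      rw [YY, if_neg hi] at hw
      simpa using hw
  · -- hY
    intro i
    rintro x ⟨w, hw, rfl⟩
    show (gg m)⁻¹ i * w ∈ YY m i
    by_cases hi : i = 0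
    · subst hi
      rw [YY, if_pos rfl]
      rw [show (gg m)⁻¹ 0 = (FreeGroup.of (0:Fin 2) ^ (m:ℤ))⁻¹ by
        rw [Pi.inv_apply, gg, if_pos rfl]]
      apply key_0Y hm
      rw [XX, if_pos rfl] at hw
      exact hw
    · rw [YY, if_neg hi]
      rw [show (gg m)⁻¹ i = FreeGroup.of (0:Fin 2) ^ (((i:ℕ)-1:ℕ):ℤ) *
        FreeGroup.mk [((1:Fin 2), false)] * (FreeGroup.of (0:Fin 2) ^ (((i:ℕ)-1:ℕ):ℤ))⁻¹ by
        rw [Pi.inv_apply, gg, if_neg hi, mul_inv_rev, mul_inv_rev, inv_inv, inv_of_eq]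
        group]
      apply key_k
      rw [XX, if_neg hi] at hw
      simpa using hw


-- ### exponent-sum homomorphism on F2 and the Schreier generation argument ###

/-- exponent sum of the generator `0` -/
def ea : FreeGroup (Fin 2) →* Multiplicative ℤ :=
  FreeGroup.lift (fun i => Multiplicative.ofAdd (if (i:ℕ) = 0 then (1:ℤ) else 0))

def Rsub : Subgroup (FreeGroup (Fin 2)) :=
  Subgroup.closure {x | ∃ z : ℤ,
    x = FreeGroup.of 0 ^ z * FreeGroup.of 1 * (FreeGroup.of 0 ^ z)⁻¹}

theorem conj_Rsub {x : FreeGroup (Fin 2)} (hx : x ∈ Rsub) (y : ℤ) :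
    FreeGroup.of 0 ^ y * x * (FreeGroup.of 0 ^ y)⁻¹ ∈ Rsub := by
  have hle : Rsub ≤ Subgroup.comap (MulAut.conj (FreeGroup.of (0:Fin 2) ^ y)).toMonoidHom Rsub := by
    rw [Rsub, Subgroup.closure_le]
    rintro x ⟨z, rfl⟩
    simp only [Subgroup.coe_comap, Set.mem_preimage, MulEquiv.coe_toMonoidHom,
      MulAut.conj_apply, SetLike.mem_coe]
    apply Subgroup.subset_closure
    refine ⟨y + z, ?_⟩
    group
  exact hle hx

theorem exists_decomp_R (w : FreeGroup (Fin 2)) :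
    ∃ r ∈ Rsub, w = r * FreeGroup.of 0 ^ (Multiplicative.toAdd (ea w)) := by
  induction w using FreeGroup.induction_on with
  | C1 => exact ⟨1, one_mem _, by simp⟩
  | of x =>
    fin_cases x
    · refine ⟨1, one_mem _, ?_⟩
      show FreeGroup.of 0 = 1 * FreeGroup.of (0:Fin 2) ^ (Multiplicative.toAdd (ea (FreeGroup.of 0)))
      rw [show ea (FreeGroup.of 0) = Multiplicative.ofAdd (1:ℤ) by
        rw [ea, FreeGroup.lift_apply_of]; simp]
      simp
    · refine ⟨FreeGroup.of 1, ?_, ?_⟩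
      · apply Subgroup.subset_closure
        exact ⟨0, by group⟩
      · show FreeGroup.of 1 = _ * FreeGroup.of (0:Fin 2) ^ (Multiplicative.toAdd (ea (FreeGroup.of 1)))
        rw [show ea (FreeGroup.of 1) = Multiplicative.ofAdd (0:ℤ) by
          rw [ea, FreeGroup.lift_apply_of]; simp]
        simp
  | inv_of x ih =>
    obtain ⟨r, hr, heq⟩ := ih
    set g := Multiplicative.toAdd (ea (FreeGroup.of x)) with hg
    refine ⟨FreeGroup.of 0 ^ (-g) * r⁻¹ * (FreeGroup.of 0 ^ (-g))⁻¹, conj_Rsub (inv_mem hr) _, ?_⟩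
    rw [show Multiplicative.toAdd (ea (FreeGroup.of x)⁻¹) = -g by rw [map_inv]; simp [hg]]
    rw [heq]
    group
  | mul x y ihx ihy =>
    obtain ⟨r1, hr1, he1⟩ := ihx
    obtain ⟨r2, hr2, he2⟩ := ihy
    set g1 := Multiplicative.toAdd (ea x) with hg1
    set g2 := Multiplicative.toAdd (ea y) with hg2
    refine ⟨r1 * (FreeGroup.of 0 ^ g1 * r2 * (FreeGroup.of 0 ^ g1)⁻¹),
      mul_mem hr1 (conj_Rsub hr2 _), ?_⟩
    rw [show Multiplicative.toAdd (ea (x * y)) = g1 + g2 by rw [map_mul]; simp [hg1, hg2]]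
    rw [he1, he2]
    group

theorem mem_range_of_dvd (m : ℕ) (hm : 1 ≤ m) (w : FreeGroup (Fin 2))
    (hdvd : (m:ℤ) ∣ Multiplicative.toAdd (ea w)) :
    w ∈ (FreeGroup.lift (gg m)).range := by
  have hgg0 : FreeGroup.lift (gg m) (FreeGroup.of 0) = FreeGroup.of (0:Fin 2) ^ (m:ℤ) := by
    rw [FreeGroup.lift_apply_of, gg, if_pos rfl]
  have hR : Rsub ≤ (FreeGroup.lift (gg m)).range := by
    rw [Rsub, Subgroup.closure_le]
    rintro x ⟨z, rfl⟩
    set q := z / (m:ℤ) with hq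
    set r' := z % (m:ℤ) with hr'
    have hz : z = (m:ℤ) * q + r' := by rw [hq, hr', Int.mul_ediv_add_emod]
    have hr0 : 0 ≤ r' := Int.emod_nonneg z (by omega)
    have hrm : r' < m := Int.emod_lt_of_pos z (by omega)
    set k : Fin (m+1) := ⟨r'.toNat + 1, by omega⟩ with hk
    have hk0 : k ≠ 0 := by
      intro h
      have := congrArg Fin.val h
      simp [hk] at this
    have hggk : FreeGroup.lift (gg m) (FreeGroup.of k) =
        FreeGroup.of 0 ^ r' * FreeGroup.of 1 * (FreeGroup.of 0 ^ r')⁻¹ := by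
      rw [FreeGroup.lift_apply_of, gg, if_neg hk0]
      congr 2 <;>
      · congr 1
        simp [hk]
        omega
    refine ⟨FreeGroup.of 0 ^ q * FreeGroup.of k * FreeGroup.of 0 ^ (-q), ?_⟩
    rw [map_mul, map_mul, map_zpow, map_zpow, hgg0, hggk]
    rw [hz]
    group
  obtain ⟨r, hr, heq⟩ := exists_decomp_R w
  obtain ⟨q, hq⟩ := hdvd
  have h2 : FreeGroup.of (0:Fin 2) ^ (Multiplicative.toAdd (ea w)) ∈
      (FreeGroup.lift (gg m)).range := by
    refine ⟨FreeGroup.of 0 ^ q, ?_⟩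
    rw [map_zpow, hgg0, ← zpow_mul, ← hq]
  rw [heq]
  exact mul_mem (hR hr) h2


-- ### the letter-flip endomorphism ###
variable {n : ℕ}

def ff (n : ℕ) (x : Fin n × Bool) : Fin n × Bool :=
  if (x.1 : ℕ) ≤ 1 then x else (x.1, !x.2)

theorem ff_fst (x : Fin n × Bool) : (ff n x).1 = x.1 := by
  rw [ff]; split <;> rfl

theorem phi_mk (φ : FreeGroup (Fin n) →* FreeGroup (Fin n))
    (hφ : ∀ i : Fin n, φ (FreeGroup.of i) =
      if (i : ℕ) ≤ 1 then FreeGroup.of i else (FreeGroup.of i)⁻¹) :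
    ∀ L : List (Fin n × Bool), φ (FreeGroup.mk L) = FreeGroup.mk (L.map (ff n)) := by
  intro L
  induction L with
  | nil => rw [List.map_nil, ← FreeGroup.one_eq_mk, map_one]
  | cons x L ih =>
    rw [show x :: L = [x] ++ L from rfl, ← FreeGroup.mul_mk, map_mul, ih,
      List.map_append, ← FreeGroup.mul_mk]
    congr 1
    obtain ⟨i, b⟩ := x
    cases b
    · rw [show FreeGroup.mk [(i, false)] = (FreeGroup.of i)⁻¹ by
        rw [show FreeGroup.of i = FreeGroup.mk [(i, true)] from rfl, FreeGroup.inv_mk]; rfl]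
      rw [map_inv, hφ]
      by_cases hi : (i:ℕ) ≤ 1
      · rw [if_pos hi, show FreeGroup.of i = FreeGroup.mk [(i, true)] from rfl,
          FreeGroup.inv_mk]
        simp [ff, hi, FreeGroup.invRev]
      · rw [if_neg hi, inv_inv]
        simp only [List.map_cons, List.map_nil, ff, if_neg hi]
        rfl
    · rw [show FreeGroup.mk [(i, true)] = FreeGroup.of i from rfl, hφ]
      by_cases hi : (i:ℕ) ≤ 1
      · rw [if_pos hi]
        simp [ff, hi]
        rfl
      · rw [if_neg hi, show FreeGroup.of i = FreeGroup.mk [(i, true)] from rfl,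
          FreeGroup.inv_mk]
        simp [ff, hi, FreeGroup.invRev]

theorem chain'_map_ff {L : List (Fin n × Bool)} (h : Chain' Rd L) :
    Chain' Rd (L.map (ff n)) := by
  rw [Chain', List.isChain_map]
  refine h.imp ?_
  intro x y hxy
  intro ⟨h1, h2⟩
  rw [ff_fst, ff_fst] at h1
  apply hxy
  refine ⟨h1, ?_⟩
  rw [ff, ff] at h2
  by_cases hx : (x.1 : ℕ) ≤ 1
  · rw [if_pos hx, if_pos (h1 ▸ hx)] at h2
    exact h2
  · rw [if_neg hx, if_neg (h1 ▸ hx)] at h2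
    simp only at h2
    cases hx2 : x.2 <;> cases hy2 : y.2 <;> simp_all

theorem map_eq_self_letters {β : Type*} (f : β → β) :
    ∀ (L : List β), L.map f = L → ∀ x ∈ L, f x = x := by
  intro L
  induction L with
  | nil => intro _ x hx; simp at hx
  | cons y L ih =>
    intro h x hx
    simp only [List.map_cons, List.cons.injEq] at h
    rcases List.mem_cons.mp hx with rfl | hx
    · exact h.1
    · exact ih h.2 x hx

theorem fixed_mem_range (hn : 2 ≤ n) (φ : FreeGroup (Fin n) →* FreeGroup (Fin n))
    (hφ : ∀ i : Fin n, φ (FreeGroup.of i) =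
      if (i : ℕ) ≤ 1 then FreeGroup.of i else (FreeGroup.of i)⁻¹)
    (u : FreeGroup (Fin n)) (hu : φ u = u) :
    u ∈ (FreeGroup.map (Fin.castLE hn)).range := by
  have h1 : φ u = FreeGroup.mk (u.toWord.map (ff n)) := by
    conv_lhs => rw [← FreeGroup.mk_toWord (x := u)]
    exact phi_mk φ hφ u.toWord
  have h2 : u.toWord.map (ff n) = u.toWord := by
    have := congrArg FreeGroup.toWord (h1.symm.trans hu)
    rwa [toWord_mk_of_chain' (chain'_map_ff (toWord_chain' u))] at this
  have h3 : ∀ x ∈ u.toWord, (x.1 : ℕ) ≤ 1 := by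
    intro x hx
    have := map_eq_self_letters (ff n) u.toWord h2 x hx
    by_contra hgt
    rw [ff, if_neg hgt] at this
    have := congrArg Prod.snd this
    simp at this
  -- now build membership by induction on the word
  have h4 : ∀ L : List (Fin n × Bool), (∀ x ∈ L, (x.1 : ℕ) ≤ 1) →
      FreeGroup.mk L ∈ (FreeGroup.map (Fin.castLE hn)).range := by
    intro L
    induction L with
    | nil => intro _; exact one_mem _
    | cons x L ih =>
      intro hL
      rw [show x :: L = [x] ++ L from rfl, ← FreeGroup.mul_mk]
      refine mul_mem ?_ (ih fun y hy => hL y (List.mem_cons_of_mem _ hy))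
      have hx1 : (x.1 : ℕ) ≤ 1 := hL x List.mem_cons_self
      set i' : Fin 2 := ⟨(x.1 : ℕ), by omega⟩ with hi'
      have hcast : Fin.castLE hn i' = x.1 := by
        apply Fin.ext
        simp [hi']
      obtain ⟨i, b⟩ := x
      cases b
      · refine ⟨(FreeGroup.of i')⁻¹, ?_⟩
        rw [map_inv, FreeGroup.map.of, hcast]
        rw [show FreeGroup.of i = FreeGroup.mk [(i, true)] from rfl, FreeGroup.inv_mk]
        rfl
      · exact ⟨FreeGroup.of i', by rw [FreeGroup.map.of, hcast]; rfl⟩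
  rw [← FreeGroup.mk_toWord (x := u)]
  exact h4 u.toWord h3


end S9

theorem stmt9 (n t : ℕ) (hn : 2 ≤ n) (ht : n < t)
    (φ : FreeGroup (Fin n) →* FreeGroup (Fin n))
    (hφ : ∀ i : Fin n, φ (FreeGroup.of i) =
      if (i : ℕ) ≤ 1 then FreeGroup.of i else (FreeGroup.of i)⁻¹)
    (γ : FreeGroup (Fin n) →* Multiplicative ℤ)
    (hγ : ∀ i : Fin n, γ (FreeGroup.of i) =
      Multiplicative.ofAdd (if (i : ℕ) = 0 then (1 : ℤ) else 0))
    (Ψ : (FreeGroup (Fin n) × Multiplicative ℤ) →* (FreeGroup (Fin n) × Multiplicative ℤ))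
    (hΨ : ∀ x : FreeGroup (Fin n) × Multiplicative ℤ,
      Ψ x = (φ x.1, Multiplicative.ofAdd
        ((t : ℤ) * Multiplicative.toAdd x.2 + Multiplicative.toAdd (γ x.1)))) :
    Nonempty (fixedSubgroup Ψ ≃* FreeGroup (Fin t)) := by
  set m : ℕ := t - 1 with hmdef
  have hm : 1 ≤ m := by omega
  have htm : t = m + 1 := by omega
  -- the maps
  set e : FreeGroup (Fin t) ≃* FreeGroup (Fin (m+1)) := FreeGroup.freeGroupCongr (finCongr htm)
    with he
  set E' : FreeGroup (Fin t) →* FreeGroup (Fin 2) :=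
    (FreeGroup.lift (S9.gg m)).comp e.toMonoidHom with hE'
  set j : FreeGroup (Fin 2) →* FreeGroup (Fin n) := FreeGroup.map (Fin.castLE hn) with hj
  set ν : FreeGroup (Fin t) →* Multiplicative ℤ :=
    FreeGroup.lift (fun k => Multiplicative.ofAdd (if (k:ℕ) = 0 then (-1:ℤ) else 0)) with hν
  set Θ : FreeGroup (Fin t) →* FreeGroup (Fin n) × Multiplicative ℤ :=
    (j.comp E').prod ν with hΘ
  -- j is injective
  have hjinj : Function.Injective j := by
    set ρ : FreeGroup (Fin n) →* FreeGroup (Fin 2) :=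
      FreeGroup.lift (fun i : Fin n =>
        if h : (i:ℕ) < 2 then FreeGroup.of (⟨(i:ℕ), h⟩ : Fin 2) else 1) with hρ
    have hcomp : ρ.comp j = MonoidHom.id _ := by
      apply FreeGroup.ext_hom
      intro i
      simp only [MonoidHom.comp_apply, MonoidHom.id_apply, hj, FreeGroup.map.of, hρ,
        FreeGroup.lift_apply_of]
      rw [dif_pos (show ((Fin.castLE hn i : Fin n) : ℕ) < 2 from i.isLt)]
      congr 1
    intro x y hxy
    have := congrArg ρ hxy
    rwa [show ρ (j x) = x from DFunLike.congr_fun hcomp x,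
      show ρ (j y) = y from DFunLike.congr_fun hcomp y] at this
  have hE'inj : Function.Injective E' :=
    (S9.lift_gg_injective m hm).comp e.injective
  have hΘinj : Function.Injective Θ := by
    intro x y hxy
    have h1 : j (E' x) = j (E' y) := congrArg Prod.fst hxy
    exact hE'inj (hjinj h1)
  -- φ fixes the range of j
  have hφj : ∀ w, φ (j w) = j w := by
    have hcomp : φ.comp j = j := by
      apply FreeGroup.ext_hom
      intro i
      simp only [MonoidHom.comp_apply, hj, FreeGroup.map.of]
      rw [hφ]
      rw [if_pos (show ((Fin.castLE hn i : Fin n) : ℕ) ≤ 1 by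
        have := i.isLt
        simp [Fin.castLE]
        omega)]
    exact fun w => DFunLike.congr_fun hcomp w
  -- γ ∘ j = ea
  have hγj : ∀ w, γ (j w) = S9.ea w := by
    have hcomp : γ.comp j = S9.ea := by
      apply FreeGroup.ext_hom
      intro i
      simp only [MonoidHom.comp_apply, hj, FreeGroup.map.of, S9.ea, FreeGroup.lift_apply_of]
      rw [hγ]
      rfl
    exact fun w => DFunLike.congr_fun hcomp w
  -- the exponent identity
  have hexp : ∀ x, Multiplicative.toAdd (γ (j (E' x))) =
      (1 - (t:ℤ)) * Multiplicative.toAdd (ν x) := by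
    have hcomp : γ.comp (j.comp E') = (zpowGroupHom (1 - (t:ℤ))).comp ν := by
      apply FreeGroup.ext_hom
      intro k
      simp only [MonoidHom.comp_apply]
      have hE'k : E' (FreeGroup.of k) = S9.gg m (finCongr htm k) := by
        rw [hE', MonoidHom.comp_apply, he]
        simp [FreeGroup.freeGroupCongr]
      rw [hE'k, S9.gg]
      by_cases hk : finCongr htm k = 0
      · rw [if_pos hk]
        have hk0 : (k:ℕ) = 0 := by
          have := congrArg Fin.val hk
          simpa using this
        rw [map_zpow, map_zpow, hγj, show S9.ea (FreeGroup.of 0) =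
          Multiplicative.ofAdd (1:ℤ) by rw [S9.ea, FreeGroup.lift_apply_of]; simp]
        rw [hν, FreeGroup.lift_apply_of, if_pos hk0]
        show Multiplicative.ofAdd (1:ℤ) ^ (m:ℤ) = zpowGroupHom (1 - (t:ℤ)) (Multiplicative.ofAdd (-1:ℤ))
        rw [zpowGroupHom]
        simp only [MonoidHom.coe_mk, OneHom.coe_mk]
        rw [← ofAdd_zsmul, ← ofAdd_zsmul]
        congr 1
        simp only [smul_eq_mul, htm]
        push_cast
        ring
      · rw [if_neg hk]
        have hk0 : (k:ℕ) ≠ 0 := by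
          intro h
          apply hk
          exact Fin.ext (by simpa using h)
        simp only [map_mul, map_zpow, map_inv]
        rw [hγj, hγj, show S9.ea (FreeGroup.of 0) =
          Multiplicative.ofAdd (1:ℤ) by rw [S9.ea, FreeGroup.lift_apply_of]; simp,
          show S9.ea (FreeGroup.of 1) = Multiplicative.ofAdd (0:ℤ) by
            rw [S9.ea, FreeGroup.lift_apply_of]; simp]
        rw [hν, FreeGroup.lift_apply_of, if_neg hk0]
        show _ = zpowGroupHom (1 - (t:ℤ)) (Multiplicative.ofAdd (0:ℤ))
        rw [zpowGroupHom]
        simp only [MonoidHom.coe_mk, OneHom.coe_mk]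
        simp
    intro x
    have := DFunLike.congr_fun hcomp x
    simp only [MonoidHom.comp_apply] at this
    rw [this]
    show Multiplicative.toAdd ((ν x) ^ (1 - (t:ℤ))) = _
    simp [mul_comm]
  -- range Θ = fixedSubgroup Ψ
  have hrange : Θ.range = fixedSubgroup Ψ := by
    ext uv
    constructor
    · rintro ⟨x, rfl⟩
      show Ψ (Θ x) = Θ x
      rw [hΨ]
      have h1 : (Θ x).1 = j (E' x) := rfl
      have h2 : (Θ x).2 = ν x := rfl
      rw [h1, h2, hφj]
      refine Prod.ext rfl ?_
      show Multiplicative.ofAdd ((t:ℤ) * Multiplicative.toAdd (ν x) +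
        Multiplicative.toAdd (γ (j (E' x)))) = ν x
      rw [hexp]
      rw [show (t:ℤ) * Multiplicative.toAdd (ν x) +
        (1 - (t:ℤ)) * Multiplicative.toAdd (ν x) = Multiplicative.toAdd (ν x) by ring]
      simp
    · intro huv
      obtain ⟨u, v⟩ := uv
      have hfix : Ψ (u, v) = (u, v) := huv
      rw [hΨ] at hfix
      have h1 : φ u = u := congrArg Prod.fst hfix
      have h2 : Multiplicative.ofAdd ((t:ℤ) * Multiplicative.toAdd v +
          Multiplicative.toAdd (γ u)) = v := congrArg Prod.snd hfix
      obtain ⟨w, rfl⟩ := S9.fixed_mem_range hn φ hφ u h1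
      have hG : Multiplicative.toAdd (S9.ea w) = (1 - (t:ℤ)) * Multiplicative.toAdd v := by
        have := congrArg Multiplicative.toAdd h2
        simp only [toAdd_ofAdd] at this
        rw [← hγj]
        linarith [this]
      have hdvd : (m:ℤ) ∣ Multiplicative.toAdd (S9.ea w) := by
        refine ⟨-Multiplicative.toAdd v, ?_⟩
        rw [hG, htm]
        push_cast
        ring
      obtain ⟨y, hy⟩ := S9.mem_range_of_dvd m hm w hdvd
      set x : FreeGroup (Fin t) := e.symm y with hx
      have hEx : E' x = w := by
        rw [hE', MonoidHom.comp_apply, hx]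
        simp only [MulEquiv.coe_toMonoidHom, MulEquiv.apply_symm_apply]
        exact hy
      have hνx : ν x = v := by
        have := hexp x
        rw [hEx, hγj, hG] at this
        have ht1 : (1 - (t:ℤ)) ≠ 0 := by omega
        have : Multiplicative.toAdd (ν x) = Multiplicative.toAdd v := by
          rw [mul_eq_mul_left_iff] at this
          rcases this with h | h
          · exact h.symm
          · omega
        exact Multiplicative.toAdd.injective this
      exact ⟨x, by rw [hΘ]; exact Prod.ext (by simpa using hEx ▸ rfl) (by simpa using hνx)⟩
  exact ⟨(MulEquiv.subgroupCongr hrange).symm.trans (MonoidHom.ofInjective hΘinj).symm⟩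
end

section
/- Let H be a group admitting a surjective homomorphism γ: H → Z, and let m ≥ 1. Then the endomorphism φ_m of H × Z defined by φ_m(u, t) = (u, γ(u) + (m+1)t) has fixed subgroup Fix φ_m = {(u,t) | γ(u) = −mt}, which is isomorphic to the normal subgroup N = {u ∈ H | γ(u) ≡ 0 mod m} of H, and [H : N] = m. -/
theorem stmt18 (H : Type*) [Group H]
    (γ : H →* Multiplicative ℤ) (hγ : Function.Surjective γ)
    (m : ℕ) (hm : 1 ≤ m)
    (φm : (H × Multiplicative ℤ) →* (H × Multiplicative ℤ))
    (hφm : ∀ x : H × Multiplicative ℤ,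
      φm x = (x.1, Multiplicative.ofAdd
        (Multiplicative.toAdd (γ x.1) + ((m : ℤ) + 1) * Multiplicative.toAdd x.2))) :
    (∀ x : H × Multiplicative ℤ, x ∈ fixedSubgroup φm ↔
      Multiplicative.toAdd (γ x.1) = -(m : ℤ) * Multiplicative.toAdd x.2) ∧
    (Subgroup.comap γ (Subgroup.zpowers (Multiplicative.ofAdd (m : ℤ)))).Normal ∧
    Nonempty (fixedSubgroup φm ≃*
      (Subgroup.comap γ (Subgroup.zpowers (Multiplicative.ofAdd (m : ℤ))))) ∧
    (Subgroup.comap γ (Subgroup.zpowers (Multiplicative.ofAdd (m : ℤ)))).index = m := by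
  set N := Subgroup.comap γ (Subgroup.zpowers (Multiplicative.ofAdd (m : ℤ))) with hN
  have hfix : ∀ x : H × Multiplicative ℤ, x ∈ fixedSubgroup φm ↔
      Multiplicative.toAdd (γ x.1) = -(m : ℤ) * Multiplicative.toAdd x.2 := by
    intro x
    have : x ∈ fixedSubgroup φm ↔ φm x = x := Iff.rfl
    rw [this, hφm x, Prod.ext_iff]
    constructor
    · rintro ⟨-, h2⟩
      have := congrArg Multiplicative.toAdd h2
      simp only [toAdd_ofAdd] at this
      linarith
    · intro h
      refine ⟨rfl, Multiplicative.toAdd.injective ?_⟩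
      simp only [toAdd_ofAdd]
      linarith
  have hzp : Subgroup.zpowers (Multiplicative.ofAdd (m : ℤ)) =
      AddSubgroup.toSubgroup (AddSubgroup.zmultiples (m : ℤ)) := by
    ext x
    show x ∈ Subgroup.zpowers (Multiplicative.ofAdd (m : ℤ)) ↔
      Multiplicative.toAdd x ∈ AddSubgroup.zmultiples (m : ℤ)
    rw [Subgroup.mem_zpowers_iff, AddSubgroup.mem_zmultiples_iff]
    constructor
    · rintro ⟨k, rfl⟩; exact ⟨k, by rw [toAdd_zpow, toAdd_ofAdd]⟩
    · rintro ⟨k, hk⟩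
      exact ⟨k, Multiplicative.toAdd.injective (by rw [toAdd_zpow, toAdd_ofAdd, hk])⟩
  refine ⟨hfix, ?_, ?_, ?_⟩
  · exact Subgroup.Normal.comap (Subgroup.zpowers _).normal_of_comm γ
  · -- isomorphism
    have hmem : ∀ x : fixedSubgroup φm, (x : H × Multiplicative ℤ).1 ∈ N := by
      rintro ⟨x, hx⟩
      rw [hfix] at hx
      refine ⟨-Multiplicative.toAdd x.2, ?_⟩
      show Multiplicative.ofAdd (m:ℤ) ^ (-Multiplicative.toAdd x.2) = γ x.1
      apply Multiplicative.toAdd.injective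
      rw [toAdd_zpow, toAdd_ofAdd, hx, smul_eq_mul]
      ring
    let f : fixedSubgroup φm →* N :=
      { toFun := fun x => ⟨(x : H × Multiplicative ℤ).1, hmem x⟩
        map_one' := rfl
        map_mul' := fun a b => rfl }
    refine ⟨MulEquiv.ofBijective f ⟨?_, ?_⟩⟩
    · rintro ⟨⟨u₁, t₁⟩, h₁⟩ ⟨⟨u₂, t₂⟩, h₂⟩ h
      have hu : u₁ = u₂ := congrArg Subtype.val h
      rw [hfix] at h₁ h₂
      simp only at h₁ h₂
      subst hu
      have hmz : (m : ℤ) ≠ 0 := by exact_mod_cast Nat.one_le_iff_ne_zero.mp hm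
      have ht : Multiplicative.toAdd t₁ = Multiplicative.toAdd t₂ := by
        rw [h₁] at h₂
        have := mul_left_cancel₀ (neg_ne_zero.mpr hmz) h₂
        omega
      have : t₁ = t₂ := Multiplicative.toAdd.injective ht
      subst this
      rfl
    · rintro ⟨u, k, hk⟩
      refine ⟨⟨(u, Multiplicative.ofAdd (-k)), ?_⟩, rfl⟩
      rw [hfix]
      simp only [← hk, toAdd_ofAdd, toAdd_zpow, smul_eq_mul]
      ring
  · rw [hN, Subgroup.index_comap_of_surjective _ hγ, hzp, AddSubgroup.index_toSubgroup,
      Int.index_zmultiples]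
    simp
end

section
/- Let H be a group admitting a surjective homomorphism onto Z, and suppose H is finite index rigid, i.e., H contains no pair of isomorphic finite-index subgroups of different indices. Then H × Z contains, up to isomorphism, infinitely many fixed subgroups of endomorphisms; more precisely, there exists a sequence of endomorphisms (φ_m)_{m≥1} of H × Z whose fixed subgroups are pairwise non-isomorphic. -/
/-- The free abelian group `ℤ^m` of rank `m`, written multiplicatively. -/
abbrev ZPowFree (m : ℕ) := Multiplicative (Fin m → ℤ)

theorem stmt19 (H : Type*) [Group H]
    (hsurj : ∃ γ : H →* Multiplicative ℤ, Function.Surjective γ)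
    (hrigid : ∀ K L : Subgroup H, K.index ≠ 0 → L.index ≠ 0 →
      Nonempty (K ≃* L) → K.index = L.index) :
    ∃ φ : ℕ → ((H × Multiplicative ℤ) →* (H × Multiplicative ℤ)),
      ∀ i j : ℕ, 1 ≤ i → 1 ≤ j → i ≠ j →
        ¬ Nonempty (fixedSubgroup (φ i) ≃* fixedSubgroup (φ j)) := by
  obtain ⟨γ, hγ⟩ := hsurj
  set φ : ℕ → ((H × Multiplicative ℤ) →* (H × Multiplicative ℤ)) := fun m =>
    (MonoidHom.fst H (Multiplicative ℤ)).prod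
      ((γ.comp (MonoidHom.fst H (Multiplicative ℤ))) *
        ((MonoidHom.snd H (Multiplicative ℤ)) ^ (m + 1))) with hφ
  set K : ℕ → Subgroup H := fun m =>
    (AddSubgroup.toSubgroup (AddSubgroup.zmultiples (m : ℤ))).comap γ with hK
  have hmem : ∀ m (x : H × Multiplicative ℤ), x ∈ fixedSubgroup (φ m) ↔
      Multiplicative.toAdd (γ x.1) + ((m : ℤ) + 1) * Multiplicative.toAdd x.2
        = Multiplicative.toAdd x.2 := by
    intro m x
    constructor
    · intro hx
      have h2 : γ x.1 * x.2 ^ (m + 1) = x.2 := congrArg Prod.snd hx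
      have h3 := congrArg Multiplicative.toAdd h2
      simp [add_mul] at h3
      linarith
    · intro hx
      have h3 : Multiplicative.toAdd (γ x.1 * x.2 ^ (m + 1)) = Multiplicative.toAdd x.2 := by
        simp [add_mul]
        linarith
      exact Prod.ext rfl (Multiplicative.toAdd.injective h3)
  have hKmem : ∀ m (h : H), h ∈ K m ↔ ((m : ℤ) ∣ Multiplicative.toAdd (γ h)) := by
    intro m h
    simp [hK, Subgroup.mem_comap]
    exact Int.mem_zmultiples_iff
  have key : ∀ m : ℕ, 1 ≤ m → Nonempty ((fixedSubgroup (φ m)) ≃* (K m)) := by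
    intro m hm
    refine ⟨MulEquiv.ofBijective
      (MonoidHom.codRestrict ((MonoidHom.fst H (Multiplicative ℤ)).comp
        (fixedSubgroup (φ m)).subtype) (K m) ?_) ⟨?_, ?_⟩⟩
    · rintro ⟨x, hx⟩
      show x.1 ∈ K m
      rw [hKmem]
      have := (hmem m x).mp hx
      exact ⟨-Multiplicative.toAdd x.2, by linarith⟩
    · rintro ⟨x, hx⟩ ⟨y, hy⟩ hxy
      have h1 : x.1 = y.1 := congrArg Subtype.val hxy
      have hx' := (hmem m x).mp hx
      have hy' := (hmem m y).mp hy
      have hm' : (m : ℤ) ≠ 0 := by exact_mod_cast Nat.one_le_iff_ne_zero.mp hm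
      have h2 : Multiplicative.toAdd x.2 = Multiplicative.toAdd y.2 := by
        rw [h1] at hx'
        have : (m : ℤ) * Multiplicative.toAdd x.2 = (m : ℤ) * Multiplicative.toAdd y.2 := by
          linarith
        exact mul_left_cancel₀ hm' this
      ext
      · exact h1
      · exact Multiplicative.toAdd.injective h2
    · rintro ⟨h, hh⟩
      obtain ⟨k, hk⟩ := (hKmem m h).mp hh
      refine ⟨⟨(h, Multiplicative.ofAdd (-k)), ?_⟩, rfl⟩
      rw [hmem]
      simp only
      simp only [toAdd_ofAdd]
      rw [hk]
      ring
  have hindex : ∀ m : ℕ, (K m).index = m := by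
    intro m
    rw [hK]
    simp only
    rw [Subgroup.index_comap_of_surjective _ hγ, AddSubgroup.index_toSubgroup,
      Int.index_zmultiples, Int.natAbs_natCast]
  refine ⟨φ, fun i j hi hj hij ⟨e⟩ => ?_⟩
  obtain ⟨ei⟩ := key i hi
  obtain ⟨ej⟩ := key j hj
  have := hrigid (K i) (K j) (by rw [hindex]; omega) (by rw [hindex]; omega)
    ⟨(ei.symm.trans e).trans ej⟩
  rw [hindex, hindex] at this
  exact hij this
end
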